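/- The difference between the average label matrix over clean subsets and the average over contaminated subsets satisfies (1/|L̄_S|)·Σ_{L ∈ L̄_S} Y_L − (1/|L̄ᶜ_S|)·Σ_{L ∈ L̄ᶜ_S} Y_L = (f_A/|L̄ᶜ_S|) · ( (K/(N−K)) · Y_N − Y_A ), where f_A = C(N−1, S−1), Y_N is the N×C matrix whose n-th row equals y_n for n ∉ A and is zero otherwise, and Y_A is the N×C matrix whose n-th row equals y_n for n ∈ A and is zero otherwise. -/

import Mathlib

open Finset

lemma count_containing {α : Type*} [DecidableEq α] (U : Finset α) (n : α) (hn : n ∈ U)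
    (S : ℕ) (hS : 1 ≤ S) :
    ((U.powersetCard S).filter (fun L => n ∈ L)).card = (U.card - 1).choose (S - 1) := by
  rw [← card_erase_of_mem hn, ← card_powersetCard]
  apply Finset.card_nbij' (fun L => L.erase n) (fun M => insert n M)
  · intro L hL
    simp only [mem_coe, mem_filter, mem_powersetCard] at hL ⊢
    exact ⟨fun x hx => mem_erase.2 ⟨(mem_erase.1 hx).1, hL.1.1 (mem_erase.1 hx).2⟩,
      by rw [card_erase_of_mem hL.2, hL.1.2]⟩
  · intro M hM
    simp only [mem_coe, mem_powersetCard] at hM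
    have hnM : n ∉ M := fun h => (mem_erase.1 (hM.1 h)).1 rfl
    simp only [mem_coe, mem_filter, mem_powersetCard]
    refine ⟨⟨insert_subset hn (hM.1.trans (erase_subset _ _)), ?_⟩, mem_insert_self _ _⟩
    rw [card_insert_of_notMem hnM, hM.2]
    omega
  · intro L hL
    simp only [mem_coe, mem_filter] at hL
    exact insert_erase hL.2
  · intro M hM
    simp only [mem_coe, mem_powersetCard] at hM
    exact erase_insert (fun h => (mem_erase.1 (hM.1 h)).1 rfl)

lemma nat_choose_id (m S : ℕ) (h1 : 1 ≤ S) (h2 : S ≤ m) :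
    m * ((m - 1).choose (S - 1)) = S * (m.choose S) := by
  obtain ⟨m', rfl⟩ : ∃ m', m = m' + 1 := ⟨m - 1, by omega⟩
  obtain ⟨s', rfl⟩ : ∃ s', S = s' + 1 := ⟨S - 1, by omega⟩
  simp only [Nat.add_sub_cancel]
  rw [Nat.add_one_mul_choose_eq, mul_comm]

lemma arith_aux (a b f T kk nn S yv : ℝ) (hb : b ≠ 0) (hM : T - b ≠ 0) (hm : nn - kk ≠ 0)
    (h1 : (nn - kk) * a = S * b) (h2 : nn * f = S * T) :
    b⁻¹ * (a * yv) - (T - b)⁻¹ * (f * yv - a * yv) = f / (T - b) * (kk / (nn - kk) * yv - 0) := by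
  field_simp
  linear_combination (yv * T) * h1 - (yv * b) * h2

theorem graphsac_average_difference {N C K S : ℕ}
    (hK : 1 ≤ K) (hS : 1 ≤ S) (hSNK : S ≤ N - K)
    (A : Finset (Fin N)) (hA : A.card = K)
    (y : Fin N → Fin C → ℝ)
    (Y : Finset (Fin N) → Matrix (Fin N) (Fin C) ℝ)
    (hY : ∀ L, Y L = Matrix.of fun n c => if n ∈ L then y n c else 0)
    (LS LbarS LbarcS : Finset (Finset (Fin N)))
    (hLS : LS = Finset.powersetCard S (Finset.univ : Finset (Fin N)))
    (hLbarS : LbarS = LS.filter (fun L => L ∩ A = ∅))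
    (hLbarcS : LbarcS = LS \ LbarS)
    (YN YA : Matrix (Fin N) (Fin C) ℝ)
    (hYN : YN = Matrix.of fun n c => if n ∈ A then 0 else y n c)
    (hYA : YA = Matrix.of fun n c => if n ∈ A then y n c else 0) :
    ((LbarS.card : ℝ))⁻¹ • (∑ L ∈ LbarS, Y L) -
        ((LbarcS.card : ℝ))⁻¹ • (∑ L ∈ LbarcS, Y L) =
      (((N - 1).choose (S - 1) : ℝ) / (LbarcS.card : ℝ)) •
        (((K : ℝ) / ((N - K : ℕ) : ℝ)) • YN - YA) := by
  have hKN : K ≤ N := hA ▸ (A.card_le_univ.trans_eq (by simp))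
  have hNK1 : 1 ≤ N - K := le_trans hS hSNK
  have hLbarS' : LbarS = Finset.powersetCard S Aᶜ := by
    rw [hLbarS, hLS]
    ext L
    simp only [mem_filter, mem_powersetCard, subset_univ, true_and,
      Finset.eq_empty_iff_forall_notMem, Finset.subset_iff, Finset.mem_inter, mem_compl, Finset.mem_univ]
    tauto
  have hAc : Aᶜ.card = N - K := by rw [card_compl, hA]; simp
  have hcardLbarS : LbarS.card = (N - K).choose S := by
    rw [hLbarS', card_powersetCard, hAc]
  have hLsub : LbarS ⊆ LS := hLbarS ▸ filter_subset _ _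
  have hcardLS : LS.card = N.choose S := by
    rw [hLS, card_powersetCard, card_univ, Fintype.card_fin]
  have hcardLbarcS : LbarcS.card = N.choose S - (N - K).choose S := by
    rw [hLbarcS, card_sdiff_of_subset hLsub, hcardLS, hcardLbarS]
  have hbpos : 0 < (N - K).choose S := Nat.choose_pos hSNK
  have hbT : (N - K).choose S < N.choose S := by
    obtain ⟨s', hs'⟩ : ∃ s', S = s' + 1 := ⟨S - 1, by omega⟩
    have h1 : (N - K + 1).choose S = (N - K).choose s' + (N - K).choose S := by
      rw [hs']; exact Nat.choose_succ_succ' _ _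
    have h2 : 0 < (N - K).choose s' := Nat.choose_pos (by omega)
    have h3 : (N - K + 1).choose S ≤ N.choose S := Nat.choose_le_choose S (by omega)
    omega
  have haf : (N - K - 1).choose (S - 1) ≤ (N - 1).choose (S - 1) :=
    Nat.choose_le_choose _ (by omega)
  have id1 : (N - K) * ((N - K - 1).choose (S - 1)) = S * ((N - K).choose S) :=
    nat_choose_id _ _ hS hSNK
  have id2 : N * ((N - 1).choose (S - 1)) = S * (N.choose S) :=
    nat_choose_id _ _ hS (by omega)
  subst hYN hYA
  ext n c
  simp only [Matrix.sub_apply, Matrix.smul_apply, Finset.sum_apply, Matrix.sum_apply,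
    smul_eq_mul, Matrix.of_apply]
  have hsum : ∀ 𝔏 : Finset (Finset (Fin N)), (∑ L ∈ 𝔏, Y L n c)
      = ((𝔏.filter (fun L => n ∈ L)).card : ℝ) * y n c := by
    intro 𝔏
    simp only [hY, Matrix.of_apply]
    rw [← Finset.sum_filter, Finset.sum_const, nsmul_eq_mul]
  have hsumLS : (∑ L ∈ LS, Y L n c) = (((N - 1).choose (S - 1) : ℕ) : ℝ) * y n c := by
    rw [hsum, hLS, count_containing _ n (mem_univ n) S hS, card_univ, Fintype.card_fin]
  have hsdiff : (∑ L ∈ LbarcS, Y L n c) = (∑ L ∈ LS, Y L n c) - (∑ L ∈ LbarS, Y L n c) := by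
    rw [hLbarcS, Finset.sum_sdiff_eq_sub hLsub]
  have hMR : (LbarcS.card : ℝ) = ((N.choose S : ℕ) : ℝ) - (((N - K).choose S : ℕ) : ℝ) := by
    rw [hcardLbarcS]; push_cast [le_of_lt hbT]; ring
  have hMne : ((N.choose S : ℕ) : ℝ) - (((N - K).choose S : ℕ) : ℝ) ≠ 0 := by
    have : (((N - K).choose S : ℕ) : ℝ) < ((N.choose S : ℕ) : ℝ) := by exact_mod_cast hbT
    linarith
  have hbne : (((N - K).choose S : ℕ) : ℝ) ≠ 0 := by positivity
  have hmne : (((N - K : ℕ)) : ℝ) ≠ 0 := by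
    have : 0 < N - K := by omega
    positivity
  rw [hsdiff, hsumLS, hcardLbarS, hMR]
  by_cases hnA : n ∈ A
  · have hz : (∑ L ∈ LbarS, Y L n c) = 0 := by
      rw [hsum]
      convert zero_mul _
      norm_cast
      rw [Finset.card_eq_zero, Finset.filter_eq_empty_iff]
      intro L hL
      rw [hLbarS'] at hL
      have := (mem_powersetCard.1 hL).1
      exact fun hn => (mem_compl.1 (this hn)) hnA
    rw [hz]
    simp only [if_pos hnA]
    field_simp
    ring
  · have hz : (∑ L ∈ LbarS, Y L n c) = (((N - K - 1).choose (S - 1) : ℕ) : ℝ) * y n c := by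
      rw [hsum, hLbarS', count_containing _ n (by simpa using hnA) S hS, hAc]
    rw [hz]
    simp only [if_neg hnA]
    have id1R : (((N - K : ℕ)) : ℝ) * (((N - K - 1).choose (S - 1) : ℕ) : ℝ)
        = (S : ℝ) * (((N - K).choose S : ℕ) : ℝ) := by exact_mod_cast id1
    have id2R : ((((N - K : ℕ)) : ℝ) + (K : ℝ)) * (((N - 1).choose (S - 1) : ℕ) : ℝ)
        = (S : ℝ) * ((N.choose S : ℕ) : ℝ) := by
      have hNm : (N : ℝ) = (((N - K : ℕ)) : ℝ) + (K : ℝ) := by push_cast [hKN]; ring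
      rw [← hNm]; exact_mod_cast id2
    have hNKc : (((N - K : ℕ)) : ℝ) = (N : ℝ) - (K : ℝ) := by push_cast [hKN]; ring
    rw [hNKc] at id1R id2R hmne ⊢
    have id2R' : (N : ℝ) * (((N - 1).choose (S - 1) : ℕ) : ℝ) = (S : ℝ) * ((N.choose S : ℕ) : ℝ) := by
      linear_combination id2R
    exact arith_aux _ _ _ _ _ _ _ _ hbne hMne hmne id1R id2R'
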